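/- Let X = U_1 + Σ v_a V_a + Σ t_a T_a be a unit spacelike vector (with u_1 = 1, u_a = 0 for a > 1). Then with respect to the basis ordering {U_a, T_a, V_a}, the Jacobi operator acts by J(X)U_a = Σ_b C_{ab}V_b - Σ_b R²_{a11b}T_b, J(X)T_a = Σ_b R²_{a11b}V_b, J(X)V_a = 0, for a suitable symmetric matrix C_{ab} depending on X; in particular J(X)³ = 0. -/
import Mathlib


open scoped BigOperators

/-- Basis of `ℝ^{3s}`: `(0, a) = U_a`, `(1, a) = V_a`, `(2, a) = T_a`. -/
abbrev BasisIdx (s : ℕ) := Fin 3 × Fin s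

/-- The basis vectors `U_a`, `V_a`, `T_a` of `ℝ^{3s}`. -/
def Uvec {s : ℕ} (a : Fin s) : BasisIdx s → ℝ := Pi.single ((0 : Fin 3), a) 1
def Vvec {s : ℕ} (a : Fin s) : BasisIdx s → ℝ := Pi.single ((1 : Fin 3), a) 1
def Tvec {s : ℕ} (a : Fin s) : BasisIdx s → ℝ := Pi.single ((2 : Fin 3), a) 1

/-- Components of the metric of Lemma 2.1: `g(U_a,U_b) = g_{ab}`,
`g(U_a,V_b) = g(V_b,U_a) = δ_{ab}`, `g(T_a,T_b) = -δ_{ab}`, all else zero. -/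
def Gmat {s : ℕ} (gm : Fin s → Fin s → ℝ) : BasisIdx s → BasisIdx s → ℝ :=
  fun x y =>
    if x.1 = 0 ∧ y.1 = 0 then gm x.2 y.2
    else if (x.1 = 0 ∧ y.1 = 1) ∨ (x.1 = 1 ∧ y.1 = 0) then (if x.2 = y.2 then 1 else 0)
    else if x.1 = 2 ∧ y.1 = 2 then (if x.2 = y.2 then (-1 : ℝ) else 0)
    else 0

/-- The bilinear form determined by the metric components. -/
def gBil {s : ℕ} (gm : Fin s → Fin s → ℝ) (X Y : BasisIdx s → ℝ) : ℝ :=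
  ∑ p, ∑ q, X p * Gmat gm p q * Y q

/-- The quadrilinear extension of a component tensor to vectors. -/
def ext {s : ℕ} (F : BasisIdx s → BasisIdx s → BasisIdx s → BasisIdx s → ℝ)
    (x y z w : BasisIdx s → ℝ) : ℝ :=
  ∑ p, ∑ q, ∑ r, ∑ t, x p * y q * z r * w t * F p q r t

/-- A (component-level) algebraic curvature tensor. -/
def IsACT {ι : Type*} (F : ι → ι → ι → ι → ℝ) : Prop :=
  (∀ x y z w, F x y z w = - F y x z w) ∧
  (∀ x y z w, F x y z w = F z w x y) ∧
  (∀ x y z w, F x y z w + F y z x w + F z x y w = 0)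

/-- `R²_{abcd} = δ_{ad}δ_{bc} - δ_{ac}δ_{bd}`, constant sectional curvature `+1`. -/
def R2const (s : ℕ) : Fin s → Fin s → Fin s → Fin s → ℝ :=
  fun a b c d =>
    (if a = d then (1 : ℝ) else 0) * (if b = c then (1 : ℝ) else 0) -
      (if a = c then (1 : ℝ) else 0) * (if b = d then (1 : ℝ) else 0)

/-- The tensor of Lemma 2.1: `R(U_a,U_b,U_c,U_d) = R¹_{abcd}`, components with
exactly one `T` index equal `R²_{abcd}` (replacing the `T` index by the
corresponding `U` index), all else zero. -/
def bigR {s : ℕ} (R1 R2 : Fin s → Fin s → Fin s → Fin s → ℝ) :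
    BasisIdx s → BasisIdx s → BasisIdx s → BasisIdx s → ℝ :=
  fun x y z w =>
    if x.1 = 0 ∧ y.1 = 0 ∧ z.1 = 0 ∧ w.1 = 0 then R1 x.2 y.2 z.2 w.2
    else if (x.1 = 2 ∧ y.1 = 0 ∧ z.1 = 0 ∧ w.1 = 0) ∨ (x.1 = 0 ∧ y.1 = 2 ∧ z.1 = 0 ∧ w.1 = 0) ∨
            (x.1 = 0 ∧ y.1 = 0 ∧ z.1 = 2 ∧ w.1 = 0) ∨ (x.1 = 0 ∧ y.1 = 0 ∧ z.1 = 0 ∧ w.1 = 2)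
      then R2 x.2 y.2 z.2 w.2
    else 0

variable {s : ℕ} (gm : Fin s → Fin s → ℝ)

lemma gBil_single (w : BasisIdx s → ℝ) (c : BasisIdx s) :
    gBil gm w (Pi.single c 1) = ∑ p, w p * Gmat gm p c := by
  unfold gBil
  refine Finset.sum_congr rfl fun p _ => ?_
  rw [Finset.sum_eq_single c]
  · simp
  · intro q _ hq; simp [Pi.single_apply, hq]
  · simp

example (w : BasisIdx s → ℝ) (b : Fin s) :
    gBil gm w (Vvec b) = w ((0:Fin 3), b) := by
  rw [Vvec, gBil_single, Fintype.sum_prod_type, Fin.sum_univ_three]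
  simp [Gmat, Finset.sum_ite_eq']

example (w : BasisIdx s → ℝ) (b : Fin s) :
    gBil gm w (Tvec b) = - w ((2:Fin 3), b) := by
  rw [Tvec, gBil_single, Fintype.sum_prod_type, Fin.sum_univ_three]
  simp [Gmat, Finset.sum_ite_eq']

example (w : BasisIdx s → ℝ) (b : Fin s) :
    gBil gm w (Uvec b) = (∑ a, w ((0:Fin 3), a) * gm a b) + w ((1:Fin 3), b) := by
  rw [Uvec, gBil_single, Fintype.sum_prod_type, Fin.sum_univ_three]
  simp [Gmat, Finset.sum_ite_eq']

lemma gBil_Vvec' (w : BasisIdx s → ℝ) (b : Fin s) :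
    gBil gm w (Vvec b) = w ((0:Fin 3), b) := by
  rw [Vvec, gBil_single, Fintype.sum_prod_type, Fin.sum_univ_three]
  simp [Gmat, Finset.sum_ite_eq']

lemma gBil_Tvec' (w : BasisIdx s → ℝ) (b : Fin s) :
    gBil gm w (Tvec b) = - w ((2:Fin 3), b) := by
  rw [Tvec, gBil_single, Fintype.sum_prod_type, Fin.sum_univ_three]
  simp [Gmat, Finset.sum_ite_eq']

lemma gBil_Uvec' (w : BasisIdx s → ℝ) (b : Fin s) :
    gBil gm w (Uvec b) = (∑ a, w ((0:Fin 3), a) * gm a b) + w ((1:Fin 3), b) := by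
  rw [Uvec, gBil_single, Fintype.sum_prod_type, Fin.sum_univ_three]
  simp [Gmat, Finset.sum_ite_eq']

lemma gNondeg (w w' : BasisIdx s → ℝ)
    (hU : ∀ b, gBil gm w (Uvec b) = gBil gm w' (Uvec b))
    (hV : ∀ b, gBil gm w (Vvec b) = gBil gm w' (Vvec b))
    (hT : ∀ b, gBil gm w (Tvec b) = gBil gm w' (Tvec b)) : w = w' := by
  have h0 : ∀ b, w ((0:Fin 3), b) = w' ((0:Fin 3), b) := by
    intro b; have := hV b; rwa [gBil_Vvec', gBil_Vvec'] at this
  have h2 : ∀ b, w ((2:Fin 3), b) = w' ((2:Fin 3), b) := by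
    intro b; have := hT b; rw [gBil_Tvec', gBil_Tvec'] at this; linarith
  have h1 : ∀ b, w ((1:Fin 3), b) = w' ((1:Fin 3), b) := by
    intro b; have := hU b; rw [gBil_Uvec', gBil_Uvec'] at this
    simp only [h0] at this; linarith
  funext p
  obtain ⟨j, a⟩ := p
  fin_cases j
  · exact h0 a
  · exact h1 a
  · exact h2 a

lemma ext_single (F : BasisIdx s → BasisIdx s → BasisIdx s → BasisIdx s → ℝ)
    (X : BasisIdx s → ℝ) (p0 c : BasisIdx s) :
    ext F (Pi.single p0 1) X X (Pi.single c 1) = ∑ q, ∑ r, X q * X r * F p0 q r c := by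
  unfold ext
  rw [Finset.sum_eq_single p0]
  · refine Finset.sum_congr rfl fun q _ => Finset.sum_congr rfl fun r _ => ?_
    rw [Finset.sum_eq_single c]
    · simp
    · intro d _ hd; simp [Pi.single_apply, hd]
    · simp
  · intro p _ hp; simp [Pi.single_apply, hp]
  · simp

section Xc
variable (i1 : Fin s) (v t : Fin s → ℝ)

lemma X0 (a : Fin s) :
    (Uvec i1 + (∑ a, v a • Vvec a) + (∑ a, t a • Tvec a)) ((0:Fin 3), a)
      = if a = i1 then 1 else 0 := by
  simp [Uvec, Vvec, Tvec, Pi.single_apply, Prod.ext_iff, Finset.sum_apply]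

lemma X1 (a : Fin s) :
    (Uvec i1 + (∑ a, v a • Vvec a) + (∑ a, t a • Tvec a)) ((1:Fin 3), a) = v a := by
  simp [Uvec, Vvec, Tvec, Pi.single_apply, Prod.ext_iff, Finset.sum_apply]

lemma X2 (a : Fin s) :
    (Uvec i1 + (∑ a, v a • Vvec a) + (∑ a, t a • Tvec a)) ((2:Fin 3), a) = t a := by
  simp [Uvec, Vvec, Tvec, Pi.single_apply, Prod.ext_iff, Finset.sum_apply]
end Xc

section Sc
variable (R1 R2 : Fin s → Fin s → Fin s → Fin s → ℝ) (i1 : Fin s) (v t : Fin s → ℝ)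
variable (X : BasisIdx s → ℝ)
variable (hx0 : ∀ a, X ((0:Fin 3), a) = if a = i1 then 1 else 0)
variable (hx1 : ∀ a, X ((1:Fin 3), a) = v a)
variable (hx2 : ∀ a, X ((2:Fin 3), a) = t a)
include hx0 hx1 hx2

omit hx0 hx1 hx2 in
lemma S_V (a : Fin s) (c : BasisIdx s) :
    ∑ q, ∑ r, X q * X r * bigR R1 R2 ((1:Fin 3), a) q r c = 0 := by
  simp [bigR]

lemma S_T0 (a d : Fin s) :
    ∑ q, ∑ r, X q * X r * bigR R1 R2 ((2:Fin 3), a) q r ((0:Fin 3), d)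
      = R2 a i1 i1 d := by
  rw [Fintype.sum_prod_type]
  simp only [Fintype.sum_prod_type, Fin.sum_univ_three]
  simp [bigR, hx0, hx1, hx2, ite_mul, mul_ite, Finset.sum_ite_eq, Finset.sum_ite_eq']

omit hx0 hx1 hx2 in
lemma S_T1 (a d : Fin s) :
    ∑ q, ∑ r, X q * X r * bigR R1 R2 ((2:Fin 3), a) q r ((1:Fin 3), d) = 0 := by
  simp [bigR]

omit hx0 hx1 hx2 in
lemma S_T2 (a d : Fin s) :
    ∑ q, ∑ r, X q * X r * bigR R1 R2 ((2:Fin 3), a) q r ((2:Fin 3), d) = 0 := by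
  simp [bigR]

omit hx0 hx1 hx2 in
lemma S_U1 (a d : Fin s) :
    ∑ q, ∑ r, X q * X r * bigR R1 R2 ((0:Fin 3), a) q r ((1:Fin 3), d) = 0 := by
  simp [bigR]

lemma S_U2 (a d : Fin s) :
    ∑ q, ∑ r, X q * X r * bigR R1 R2 ((0:Fin 3), a) q r ((2:Fin 3), d)
      = R2 a i1 i1 d := by
  rw [Fintype.sum_prod_type]
  simp only [Fintype.sum_prod_type, Fin.sum_univ_three]
  simp [bigR, hx0, hx1, hx2, ite_mul, mul_ite, Finset.sum_ite_eq, Finset.sum_ite_eq']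

lemma S_U0 (a d : Fin s) :
    ∑ q, ∑ r, X q * X r * bigR R1 R2 ((0:Fin 3), a) q r ((0:Fin 3), d)
      = R1 a i1 i1 d + (∑ b, t b * R2 a i1 b d) + (∑ b, t b * R2 a b i1 d) := by
  rw [Fintype.sum_prod_type]
  simp only [Fintype.sum_prod_type, Fin.sum_univ_three]
  simp [bigR, hx0, hx1, hx2, ite_mul, mul_ite, Finset.sum_ite_eq, Finset.sum_ite_eq']
  rw [Finset.sum_add_distrib]
  simp [Finset.sum_ite_eq']
end Sc

lemma act_swap34 {ι : Type*} {F : ι → ι → ι → ι → ℝ} (h : IsACT F) (x y z w : ι) :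
    F x y z w = - F x y w z := by
  rw [h.2.1 x y z w, h.1 z w x y, h.2.1 w z x y]

lemma act_sym1 {ι : Type*} {F : ι → ι → ι → ι → ℝ} (h : IsACT F) (a i d : ι) :
    F a i i d = F d i i a := by
  rw [h.2.1 a i i d, h.1 i d a i, act_swap34 h d i a i]; ring

lemma act_sym2 {ι : Type*} {F : ι → ι → ι → ι → ℝ} (h : IsACT F) (a b i d : ι) :
    F a b i d = F d i b a := by
  rw [h.2.1 a b i d, h.1 i d a b, act_swap34 h d i a b]; ring

section Combo
variable (f g : Fin s → ℝ)

lemma combo0 (c : Fin s) :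
    ((∑ b, f b • Vvec b) - ∑ b, g b • Tvec b) ((0:Fin 3), c) = 0 := by
  simp [Vvec, Tvec, Pi.single_apply, Prod.ext_iff, Finset.sum_apply]

lemma combo1 (c : Fin s) :
    ((∑ b, f b • Vvec b) - ∑ b, g b • Tvec b) ((1:Fin 3), c) = f c := by
  simp [Vvec, Tvec, Pi.single_apply, Prod.ext_iff, Finset.sum_apply]

lemma combo2 (c : Fin s) :
    ((∑ b, f b • Vvec b) - ∑ b, g b • Tvec b) ((2:Fin 3), c) = - g c := by
  simp [Vvec, Tvec, Pi.single_apply, Prod.ext_iff, Finset.sum_apply]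

lemma vsum0 (c : Fin s) : (∑ b, f b • Vvec b) ((0:Fin 3), c) = 0 := by
  simp [Vvec, Pi.single_apply, Prod.ext_iff, Finset.sum_apply]

lemma vsum1 (c : Fin s) : (∑ b, f b • Vvec b) ((1:Fin 3), c) = f c := by
  simp [Vvec, Pi.single_apply, Prod.ext_iff, Finset.sum_apply]

lemma vsum2 (c : Fin s) : (∑ b, f b • Vvec b) ((2:Fin 3), c) = 0 := by
  simp [Vvec, Pi.single_apply, Prod.ext_iff, Finset.sum_apply]
end Combo


/-- for a unit spacelike vector `X = U_1 + Σ v_a V_a + Σ t_a T_a`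
(so `u_1 = 1`, `u_a = 0` for `a > 1`), the Jacobi operator of the tensor
`R(R¹,R²)` of Lemma 2.1 acts by `J(X)U_a = Σ_b C_{ab} V_b - Σ_b R²_{a11b} T_b`,
`J(X)T_a = Σ_b R²_{a11b} V_b`, `J(X)V_a = 0` for a suitable symmetric matrix
`C` depending on `X`; in particular `J(X)³ = 0`.
Here `i1` denotes the first index (`1` in the paper's numbering). -/
theorem stmt8 (s : ℕ) (hs : 2 ≤ s) (i1 : Fin s) (hi1 : (i1 : ℕ) = 0)
    (gm : Fin s → Fin s → ℝ) (hgm : ∀ a b, gm a b = gm b a)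
    (R1 R2 : Fin s → Fin s → Fin s → Fin s → ℝ)
    (h1 : IsACT R1) (h2 : IsACT R2)
    (v t : Fin s → ℝ) (X : BasisIdx s → ℝ)
    (hXdef : X = Uvec i1 + (∑ a, v a • Vvec a) + (∑ a, t a • Tvec a))
    (hX : gBil gm X X = 1)
    (J : Module.End ℝ (BasisIdx s → ℝ))
    (hJ : ∀ y z, gBil gm (J y) z = ext (bigR R1 R2) y X X z) :
    ∃ C : Fin s → Fin s → ℝ, (∀ a b, C a b = C b a) ∧
      (∀ a, J (Uvec a) = (∑ b, C a b • Vvec b) - ∑ b, R2 a i1 i1 b • Tvec b) ∧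
      (∀ a, J (Tvec a) = ∑ b, R2 a i1 i1 b • Vvec b) ∧
      (∀ a, J (Vvec a) = 0) ∧
      J ^ 3 = 0 := by
  have hx0 : ∀ a, X ((0:Fin 3), a) = if a = i1 then 1 else 0 := by
    intro a; rw [hXdef]; exact X0 i1 v t a
  have hx1 : ∀ a, X ((1:Fin 3), a) = v a := by
    intro a; rw [hXdef]; exact X1 i1 v t a
  have hx2 : ∀ a, X ((2:Fin 3), a) = t a := by
    intro a; rw [hXdef]; exact X2 i1 v t a
  set C : Fin s → Fin s → ℝ :=
    fun a d => R1 a i1 i1 d + (∑ b, t b * R2 a i1 b d) + (∑ b, t b * R2 a b i1 d) with hC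
  have hCsym : ∀ a d, C a d = C d a := by
    intro a d
    have e1 := act_sym1 h1 a i1 d
    have s2 : (∑ b, t b * R2 a i1 b d) = ∑ b, t b * R2 d b i1 a :=
      Finset.sum_congr rfl fun b _ => by rw [act_sym2 h2 a i1 b d]
    have s3 : (∑ b, t b * R2 a b i1 d) = ∑ b, t b * R2 d i1 b a :=
      Finset.sum_congr rfl fun b _ => by rw [act_sym2 h2 a b i1 d]
    simp only [hC, e1, s2, s3]
    ring
  have hJV : ∀ a, J (Vvec a) = 0 := by
    intro a
    apply gNondeg gm
    · intro b
      rw [(hJ (Vvec a) (Uvec b)).trans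
        ((ext_single (bigR R1 R2) X ((1:Fin 3), a) ((0:Fin 3), b)).trans
          (S_V R1 R2 X a ((0:Fin 3), b))), gBil_Uvec']
      try simp
    · intro b
      rw [(hJ (Vvec a) (Vvec b)).trans
        ((ext_single (bigR R1 R2) X ((1:Fin 3), a) ((1:Fin 3), b)).trans
          (S_V R1 R2 X a ((1:Fin 3), b))), gBil_Vvec']
      try simp
    · intro b
      rw [(hJ (Vvec a) (Tvec b)).trans
        ((ext_single (bigR R1 R2) X ((1:Fin 3), a) ((2:Fin 3), b)).trans
          (S_V R1 R2 X a ((2:Fin 3), b))), gBil_Tvec']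
      try simp
  have hJT : ∀ a, J (Tvec a) = ∑ b, R2 a i1 i1 b • Vvec b := by
    intro a
    apply gNondeg gm
    · intro b
      rw [(hJ (Tvec a) (Uvec b)).trans
        ((ext_single (bigR R1 R2) X ((2:Fin 3), a) ((0:Fin 3), b)).trans
          (S_T0 R1 R2 i1 v t X hx0 hx1 hx2 a b)), gBil_Uvec']
      simp only [vsum0, vsum1]
      simp
    · intro b
      rw [(hJ (Tvec a) (Vvec b)).trans
        ((ext_single (bigR R1 R2) X ((2:Fin 3), a) ((1:Fin 3), b)).trans
          (S_T1 R1 R2 X a b)), gBil_Vvec', vsum0]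
      try simp
    · intro b
      rw [(hJ (Tvec a) (Tvec b)).trans
        ((ext_single (bigR R1 R2) X ((2:Fin 3), a) ((2:Fin 3), b)).trans
          (S_T2 R1 R2 X a b)), gBil_Tvec', vsum2]
      try simp
  have hJU : ∀ a, J (Uvec a) = (∑ b, C a b • Vvec b) - ∑ b, R2 a i1 i1 b • Tvec b := by
    intro a
    apply gNondeg gm
    · intro b
      rw [(hJ (Uvec a) (Uvec b)).trans
        ((ext_single (bigR R1 R2) X ((0:Fin 3), a) ((0:Fin 3), b)).trans
          (S_U0 R1 R2 i1 v t X hx0 hx1 hx2 a b)), gBil_Uvec']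
      simp only [combo0, combo1]
      simp [hC]
    · intro b
      rw [(hJ (Uvec a) (Vvec b)).trans
        ((ext_single (bigR R1 R2) X ((0:Fin 3), a) ((1:Fin 3), b)).trans
          (S_U1 R1 R2 X a b)), gBil_Vvec', combo0]
      try simp
    · intro b
      rw [(hJ (Uvec a) (Tvec b)).trans
        ((ext_single (bigR R1 R2) X ((0:Fin 3), a) ((2:Fin 3), b)).trans
          (S_U2 R1 R2 i1 v t X hx0 hx1 hx2 a b)), gBil_Tvec', combo2]
      ring
  have key : ∀ p : BasisIdx s, J (J (J (Pi.single p 1))) = 0 := by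
    rintro ⟨j, a⟩
    fin_cases j
    · show J (J (J (Uvec a))) = 0
      simp [hJU, hJT, hJV, map_sub, map_sum, map_smul]
    · show J (J (J (Vvec a))) = 0
      simp [hJV]
    · show J (J (J (Tvec a))) = 0
      simp [hJT, hJV, map_sum, map_smul]
  refine ⟨C, hCsym, hJU, hJT, hJV, ?_⟩
  refine Module.Basis.ext (Pi.basisFun ℝ (BasisIdx s)) fun p => ?_
  simp only [Pi.basisFun_apply, LinearMap.zero_apply,
    pow_succ, pow_zero, Module.End.mul_apply, Module.End.one_apply]
  exact key p
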